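/- Let 1 < p < ∞ and let c(p) = tan(π/(2p)) if p ≤ 2 and c(p) = cot(π/(2p)) if p > 2. Let H : L^p(ℝ, ℝ) → L^p(ℝ, ℝ) be a continuous linear map with ‖H g‖_p ≤ c(p) ‖g‖_p for all g. Let 0 < m ≤ M and let K, K̃ : ℝ → ℝ be measurable functions with m ≤ K(y) ≤ M and m ≤ K̃(y) ≤ M for almost every y, and with log K, log K̃ ∈ L^p(ℝ, ℝ). Let h and h̃ be measurable representatives of H(log K) and H(log K̃), and define K₊(y) = √(K(y)) · exp((i/2)h(y)) and K̃₊(y) = √(K̃(y)) · exp((i/2)h̃(y)) (and analogously K₋, K̃₋ with −(i/2)). If ‖K − K̃‖_p ≤ ε, then ‖K₊ − K̃₊‖_p ≤ (M^{1/2}/(2m)) (1 + c(p)) ε, and the same bound holds for ‖K₋ − K̃₋‖_p. -/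

import Mathlib

open MeasureTheory Real
open scoped ENNReal

/-- The best constant in the Titchmarsh–Riesz theorem. -/
noncomputable def TRconst (p : ℝ) : ℝ :=
  if p ≤ 2 then Real.tan (Real.pi / (2 * p)) else Real.cot (Real.pi / (2 * p))

lemma WH_abs_exp_I_sub_one (θ : ℝ) :
    ‖Complex.exp ((θ : ℂ) * Complex.I) - 1‖ ≤ |θ| := by
  have h1 : Complex.exp ((θ : ℂ) * Complex.I) - 1
      = Complex.ofReal (Real.cos θ - 1) + Complex.ofReal (Real.sin θ) * Complex.I := by
    rw [Complex.exp_mul_I]; push_cast; ring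
  rw [h1]
  have h2 : ‖Complex.ofReal (Real.cos θ - 1) + Complex.ofReal (Real.sin θ) * Complex.I‖
      = Real.sqrt ((Real.cos θ - 1)^2 + (Real.sin θ)^2) := by
    rw [Complex.norm_def, Complex.normSq_apply]
    simp [pow_two, Complex.cos_ofReal_re, Complex.sin_ofReal_re]
  rw [h2]
  have h3 : (Real.cos θ - 1)^2 + (Real.sin θ)^2 = 2 - 2 * Real.cos θ := by
    have := Real.sin_sq_add_cos_sq θ
    nlinarith
  rw [h3]
  have h4 : 2 - 2 * Real.cos θ = 4 * ((1 - Real.cos θ) / 2) := by ring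
  rw [h4, show (4 : ℝ) * ((1 - Real.cos θ)/2) = 2^2 * ((1 - Real.cos θ)/2) by norm_num,
    Real.sqrt_mul (by positivity), Real.sqrt_sq (by norm_num), ← Real.abs_sin_half]
  calc 2 * |Real.sin (θ / 2)| ≤ 2 * |θ / 2| := by
        have := Real.abs_sin_le_abs (x := θ / 2); gcongr
    _ = |θ| := by rw [abs_div]; norm_num; ring

lemma WH_abs_exp_aI (a t : ℝ) :
    ‖Complex.exp ((a : ℂ) * Complex.I * (t : ℂ))‖ = 1 := by
  have h : (a : ℂ) * Complex.I * (t : ℂ) = ((a * t : ℝ) : ℂ) * Complex.I := by push_cast; ring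
  rw [h, Complex.norm_exp_ofReal_mul_I]

lemma WH_abs_exp_sub_exp (a s t : ℝ) :
    ‖Complex.exp ((a : ℂ) * Complex.I * (s : ℂ)) -
      Complex.exp ((a : ℂ) * Complex.I * (t : ℂ))‖ ≤ |a| * |s - t| := by
  have key : Complex.exp ((a:ℂ) * Complex.I * (s:ℂ)) - Complex.exp ((a:ℂ) * Complex.I * (t:ℂ))
      = Complex.exp ((a:ℂ) * Complex.I * (t:ℂ)) *
        (Complex.exp (((a * (s - t) : ℝ) : ℂ) * Complex.I) - 1) := by
    rw [mul_sub, mul_one, ← Complex.exp_add]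
    congr 2
    push_cast; ring
  rw [key, norm_mul, WH_abs_exp_aI, one_mul]
  calc ‖Complex.exp (((a * (s - t) : ℝ) : ℂ) * Complex.I) - 1‖
      ≤ |a * (s - t)| := WH_abs_exp_I_sub_one _
    _ = |a| * |s - t| := abs_mul _ _

lemma WH_sqrt_diff {m a b : ℝ} (hm : 0 < m) (ha : m ≤ a) (hb : m ≤ b) :
    |Real.sqrt a - Real.sqrt b| ≤ |a - b| / (2 * Real.sqrt m) := by
  have hsm : 0 < Real.sqrt m := Real.sqrt_pos.2 hm
  rw [le_div_iff₀ (by positivity)]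
  have h1 := Real.mul_self_sqrt (hm.le.trans ha)
  have h2 := Real.mul_self_sqrt (hm.le.trans hb)
  have key : (Real.sqrt a - Real.sqrt b) * (Real.sqrt a + Real.sqrt b) = a - b := by
    nlinarith [h1, h2]
  have hma : Real.sqrt m ≤ Real.sqrt a := Real.sqrt_le_sqrt ha
  have hmb : Real.sqrt m ≤ Real.sqrt b := Real.sqrt_le_sqrt hb
  calc |Real.sqrt a - Real.sqrt b| * (2 * Real.sqrt m)
      ≤ |Real.sqrt a - Real.sqrt b| * (Real.sqrt a + Real.sqrt b) := by
        gcongr; linarith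
    _ = |(Real.sqrt a - Real.sqrt b) * (Real.sqrt a + Real.sqrt b)| := by
        rw [abs_mul, abs_of_nonneg (by positivity : (0:ℝ) ≤ Real.sqrt a + Real.sqrt b)]
    _ = |a - b| := by rw [key]

lemma WH_log_diff {m a b : ℝ} (hm : 0 < m) (ha : m ≤ a) (hb : m ≤ b) :
    |Real.log a - Real.log b| ≤ |a - b| / m := by
  have main : ∀ x y : ℝ, m ≤ x → m ≤ y →
      Real.log x - Real.log y ≤ |x - y| / m := by
    intro x y hx hy
    have hpx : 0 < x := hm.trans_le hx
    have hpy : 0 < y := hm.trans_le hy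
    rw [← Real.log_div hpx.ne' hpy.ne']
    calc Real.log (x / y) ≤ x / y - 1 := Real.log_le_sub_one_of_pos (by positivity)
      _ = (x - y) / y := by field_simp
      _ ≤ |x - y| / m := div_le_div₀ (abs_nonneg _) (le_abs_self _) hm hy
  rw [abs_sub_le_iff]
  refine ⟨main a b ha hb, ?_⟩
  have := main b a hb ha
  rwa [abs_sub_comm] at this

lemma WH_TRconst_nonneg {p : ℝ} (hp : 1 < p) : 0 ≤ TRconst p := by
  have hp0 : 0 < p := by linarith
  have hpi := Real.pi_pos
  unfold TRconst
  split_ifs with h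
  · apply Real.tan_nonneg_of_nonneg_of_le_pi_div_two (by positivity)
    rw [div_le_div_iff₀ (by positivity) two_pos]
    nlinarith
  · rw [Real.cot_eq_cos_div_sin]
    apply div_nonneg
    · apply Real.cos_nonneg_of_mem_Icc
      constructor
      · have : (0:ℝ) ≤ Real.pi / (2 * p) := by positivity
        linarith
      · rw [div_le_div_iff₀ (by positivity) two_pos]; nlinarith
    · apply Real.sin_nonneg_of_nonneg_of_le_pi (by positivity)
      rw [div_le_iff₀ (by positivity)]; nlinarith

lemma WH_eLpNorm_le {E : Type*} [NormedAddCommGroup E] {q : ℝ≥0∞} {f : ℝ → E} {g : ℝ → ℝ}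
    {c : ℝ} (hc : 0 ≤ c) (hfg : ∀ᵐ y : ℝ, ‖f y‖ ≤ c * ‖g y‖) :
    eLpNorm f q (volume : Measure ℝ) ≤ ENNReal.ofReal c * eLpNorm g q (volume : Measure ℝ) := by
  calc eLpNorm f q volume ≤ eLpNorm (c • g) q volume := by
        apply eLpNorm_mono_ae
        filter_upwards [hfg] with y hy
        simpa [norm_smul, abs_of_nonneg hc] using hy
    _ = ‖c‖₊ • eLpNorm g q volume := eLpNorm_const_smul c g q volume
    _ = ENNReal.ofReal c * eLpNorm g q volume := by
        rw [ENNReal.smul_def, smul_eq_mul, ← enorm_eq_nnnorm, Real.enorm_eq_ofReal hc]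

lemma WH_main_aux (p : ℝ) (hp : 1 < p)
    [Fact (1 ≤ ENNReal.ofReal p)]
    (H : Lp ℝ (ENNReal.ofReal p) (volume : Measure ℝ) →L[ℝ]
         Lp ℝ (ENNReal.ofReal p) (volume : Measure ℝ))
    (hH : ∀ g, ‖H g‖ ≤ TRconst p * ‖g‖)
    (m M : ℝ) (hm : 0 < m) (hmM : m ≤ M)
    (K Ktilde : ℝ → ℝ) (hKmeas : Measurable K) (hKtmeas : Measurable Ktilde)
    (hKbd : ∀ᵐ y : ℝ, m ≤ K y ∧ K y ≤ M) (hKtbd : ∀ᵐ y : ℝ, m ≤ Ktilde y ∧ Ktilde y ≤ M)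
    (hL : MemLp (fun y => Real.log (K y)) (ENNReal.ofReal p) (volume : Measure ℝ))
    (hLt : MemLp (fun y => Real.log (Ktilde y)) (ENNReal.ofReal p) (volume : Measure ℝ))
    (h htilde : ℝ → ℝ) (hhmeas : Measurable h) (hhtmeas : Measurable htilde)
    (hrep : h =ᵐ[volume] (H (hL.toLp _) : Lp ℝ (ENNReal.ofReal p) (volume : Measure ℝ)))
    (hrept : htilde =ᵐ[volume]
      (H (hLt.toLp _) : Lp ℝ (ENNReal.ofReal p) (volume : Measure ℝ)))
    (ε : ℝ)
    (hdist : eLpNorm (fun y => K y - Ktilde y) (ENNReal.ofReal p) (volume : Measure ℝ) ≤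
      ENNReal.ofReal ε)
    (a : ℝ) (ha : |a| ≤ 1 / 2) :
    eLpNorm (fun y =>
        (Real.sqrt (K y) : ℂ) * Complex.exp ((a : ℂ) * Complex.I * (h y : ℂ)) -
        (Real.sqrt (Ktilde y) : ℂ) * Complex.exp ((a : ℂ) * Complex.I * (htilde y : ℂ)))
        (ENNReal.ofReal p) (volume : Measure ℝ) ≤
      ENNReal.ofReal (Real.sqrt M / (2 * m) * (1 + TRconst p) * ε) := by
  set q : ℝ≥0∞ := ENNReal.ofReal p with hq
  have hq1 : 1 ≤ q := Fact.out
  set D : ℝ≥0∞ := eLpNorm (fun y => K y - Ktilde y) q volume with hDdef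
  have hTR : 0 ≤ TRconst p := WH_TRconst_nonneg hp
  have hM0 : 0 < M := hm.trans_le hmM
  set A : ℝ → ℂ := fun y =>
    ((Real.sqrt (K y) - Real.sqrt (Ktilde y) : ℝ) : ℂ) *
      Complex.exp ((a : ℂ) * Complex.I * (h y : ℂ)) with hAdef
  set B : ℝ → ℂ := fun y =>
    ((Real.sqrt (Ktilde y) : ℝ) : ℂ) *
      (Complex.exp ((a : ℂ) * Complex.I * (h y : ℂ)) -
       Complex.exp ((a : ℂ) * Complex.I * (htilde y : ℂ))) with hBdef
  have hsplit : (fun y =>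
        (Real.sqrt (K y) : ℂ) * Complex.exp ((a : ℂ) * Complex.I * (h y : ℂ)) -
        (Real.sqrt (Ktilde y) : ℂ) * Complex.exp ((a : ℂ) * Complex.I * (htilde y : ℂ)))
      = fun y => A y + B y := by
    funext y
    simp only [hAdef, hBdef]
    push_cast
    ring
  have hAmeas : AEStronglyMeasurable A volume := by
    apply Measurable.aestronglyMeasurable
    apply Measurable.mul
    · exact Complex.measurable_ofReal.comp ((hKmeas.sqrt).sub (hKtmeas.sqrt))
    · exact Complex.measurable_exp.comp
        (measurable_const.mul (Complex.measurable_ofReal.comp hhmeas))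
  have hBmeas : AEStronglyMeasurable B volume := by
    apply Measurable.aestronglyMeasurable
    apply Measurable.mul
    · exact Complex.measurable_ofReal.comp hKtmeas.sqrt
    · exact (Complex.measurable_exp.comp
        (measurable_const.mul (Complex.measurable_ofReal.comp hhmeas))).sub
        (Complex.measurable_exp.comp
          (measurable_const.mul (Complex.measurable_ofReal.comp hhtmeas)))
  -- step 1 : bound on A
  have hc1 : (0:ℝ) ≤ Real.sqrt M / (2 * m) := by positivity
  have hstep1 : eLpNorm A q volume ≤ ENNReal.ofReal (Real.sqrt M / (2 * m)) * D := by
    apply WH_eLpNorm_le hc1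
    filter_upwards [hKbd, hKtbd] with y hy1 hy2
    have habs : ‖A y‖ = |Real.sqrt (K y) - Real.sqrt (Ktilde y)| := by
      simp only [hAdef]
      rw [norm_mul, WH_abs_exp_aI, mul_one,
        Complex.norm_real, Real.norm_eq_abs]
    rw [habs, Real.norm_eq_abs]
    calc |Real.sqrt (K y) - Real.sqrt (Ktilde y)|
        ≤ |K y - Ktilde y| / (2 * Real.sqrt m) := WH_sqrt_diff hm hy1.1 hy2.1
      _ ≤ Real.sqrt M / (2 * m) * |K y - Ktilde y| := by
          rw [div_eq_mul_inv, mul_comm]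
          gcongr
          rw [inv_le_iff_one_le_mul₀ (by positivity)]
          have h1 : Real.sqrt m ≤ Real.sqrt M := Real.sqrt_le_sqrt hmM
          have h2 : Real.sqrt m * Real.sqrt m = m := Real.mul_self_sqrt hm.le
          rw [div_mul_eq_mul_div, le_div_iff₀ (by positivity), one_mul]
          nlinarith [Real.sqrt_nonneg m, Real.sqrt_nonneg M]
  -- step 3 : Hilbert transform bound
  set E : ℝ≥0∞ := eLpNorm (fun y => h y - htilde y) q volume with hEdef
  have hstep3 : E ≤ ENNReal.ofReal (TRconst p) * (ENNReal.ofReal (1 / m) * D) := by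
    set f := hL.toLp _ with hfdef
    set ft := hLt.toLp _ with hftdef
    have e1 : (fun y => h y - htilde y) =ᵐ[volume] ⇑(H f - H ft) := by
      filter_upwards [hrep, hrept, Lp.coeFn_sub (H f) (H ft)] with y h1 h2 h3
      rw [h1, h2, h3, Pi.sub_apply]
    have e2 : E = ENNReal.ofReal ‖H f - H ft‖ := by
      rw [hEdef, eLpNorm_congr_ae e1, Lp.norm_def, ENNReal.ofReal_toReal (Lp.eLpNorm_ne_top _)]
    have e3 : ‖H f - H ft‖ ≤ TRconst p * ‖f - ft‖ := by
      rw [← map_sub]; exact hH _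
    have e4 : ENNReal.ofReal ‖f - ft‖
        = eLpNorm (fun y => Real.log (K y) - Real.log (Ktilde y)) q volume := by
      rw [Lp.norm_def, ENNReal.ofReal_toReal (Lp.eLpNorm_ne_top _)]
      apply eLpNorm_congr_ae
      filter_upwards [Lp.coeFn_sub f ft, hL.coeFn_toLp, hLt.coeFn_toLp] with y h1 h2 h3
      rw [h1, Pi.sub_apply, h2, h3]
    have e5 : eLpNorm (fun y => Real.log (K y) - Real.log (Ktilde y)) q volume
        ≤ ENNReal.ofReal (1 / m) * D := by
      apply WH_eLpNorm_le (by positivity)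
      filter_upwards [hKbd, hKtbd] with y hy1 hy2
      rw [Real.norm_eq_abs, Real.norm_eq_abs]
      calc |Real.log (K y) - Real.log (Ktilde y)|
          ≤ |K y - Ktilde y| / m := WH_log_diff hm hy1.1 hy2.1
        _ = 1 / m * |K y - Ktilde y| := by ring
    calc E = ENNReal.ofReal ‖H f - H ft‖ := e2
      _ ≤ ENNReal.ofReal (TRconst p * ‖f - ft‖) := ENNReal.ofReal_le_ofReal e3
      _ = ENNReal.ofReal (TRconst p) * ENNReal.ofReal ‖f - ft‖ := ENNReal.ofReal_mul hTR
      _ ≤ ENNReal.ofReal (TRconst p) * (ENNReal.ofReal (1 / m) * D) := by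
          rw [e4]; exact mul_le_mul_right e5 _
  -- step 2 : bound on B
  have hstep2 : eLpNorm B q volume ≤ ENNReal.ofReal (Real.sqrt M / 2) * E := by
    apply WH_eLpNorm_le (by positivity)
    filter_upwards [hKbd, hKtbd] with y hy1 hy2
    simp only [hBdef]
    rw [norm_mul, Complex.norm_real, Real.norm_eq_abs, Real.norm_eq_abs]
    have h1 : |Real.sqrt (Ktilde y)| ≤ Real.sqrt M := by
      rw [abs_of_nonneg (Real.sqrt_nonneg _)]
      exact Real.sqrt_le_sqrt hy2.2
    have h2 : ‖Complex.exp ((a : ℂ) * Complex.I * (h y : ℂ)) -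
        Complex.exp ((a : ℂ) * Complex.I * (htilde y : ℂ))‖ ≤ 1 / 2 * |h y - htilde y| := by
      calc ‖_‖ ≤ |a| * |h y - htilde y| := WH_abs_exp_sub_exp a (h y) (htilde y)
        _ ≤ 1 / 2 * |h y - htilde y| := by gcongr
    calc |Real.sqrt (Ktilde y)| * ‖_ - _‖
        ≤ Real.sqrt M * (1 / 2 * |h y - htilde y|) := by
          apply mul_le_mul h1 h2 (norm_nonneg _) (Real.sqrt_nonneg _)
      _ = Real.sqrt M / 2 * |h y - htilde y| := by ring
  -- assemble
  calc eLpNorm (fun y =>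
        (Real.sqrt (K y) : ℂ) * Complex.exp ((a : ℂ) * Complex.I * (h y : ℂ)) -
        (Real.sqrt (Ktilde y) : ℂ) * Complex.exp ((a : ℂ) * Complex.I * (htilde y : ℂ)))
        q volume
      = eLpNorm (fun y => A y + B y) q volume := by rw [hsplit]
    _ ≤ eLpNorm A q volume + eLpNorm B q volume := eLpNorm_add_le hAmeas hBmeas hq1
    _ ≤ ENNReal.ofReal (Real.sqrt M / (2 * m)) * D +
        ENNReal.ofReal (Real.sqrt M / 2) *
          (ENNReal.ofReal (TRconst p) * (ENNReal.ofReal (1 / m) * D)) :=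
        add_le_add hstep1 (hstep2.trans (mul_le_mul_right hstep3 _))
    _ = ENNReal.ofReal (Real.sqrt M / (2 * m) * (1 + TRconst p)) * D := by
        have e6 : ENNReal.ofReal (Real.sqrt M / 2) *
            (ENNReal.ofReal (TRconst p) * (ENNReal.ofReal (1 / m) * D))
            = ENNReal.ofReal (Real.sqrt M / 2 * (TRconst p * (1 / m))) * D := by
          rw [ENNReal.ofReal_mul (by positivity), ENNReal.ofReal_mul hTR]
          ring
        rw [e6, ← add_mul, ← ENNReal.ofReal_add (by positivity)
          (mul_nonneg (by positivity) (mul_nonneg hTR (by positivity)))]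
        congr 2
        field_simp
    _ ≤ ENNReal.ofReal (Real.sqrt M / (2 * m) * (1 + TRconst p)) * ENNReal.ofReal ε :=
        mul_le_mul_right hdist _
    _ ≤ ENNReal.ofReal (Real.sqrt M / (2 * m) * (1 + TRconst p) * ε) :=
        le_of_eq (ENNReal.ofReal_mul (mul_nonneg hc1 (by linarith))).symm

/-- **Multiplicative bounds in `L^p` for real-valued kernels**: if the kernels `K, K̃`
are real with `m ≤ K ≤ M` a.e., then the factors
`K₊ = K^{1/2} exp((i/2)H(log K))`, `K₋ = K^{1/2} exp(−(i/2)H(log K))` satisfy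
`‖K₊ − K̃₊‖_p ≤ (M^{1/2}/(2m)) (1 + c(p)) ε` whenever `‖K − K̃‖_p ≤ ε`. -/
theorem multiplicative_wiener_hopf_bounds_real (p : ℝ) (hp : 1 < p)
    [Fact (1 ≤ ENNReal.ofReal p)]
    (H : Lp ℝ (ENNReal.ofReal p) (volume : Measure ℝ) →L[ℝ]
         Lp ℝ (ENNReal.ofReal p) (volume : Measure ℝ))
    (hH : ∀ g, ‖H g‖ ≤ TRconst p * ‖g‖)
    (m M : ℝ) (hm : 0 < m) (hmM : m ≤ M)
    (K Ktilde : ℝ → ℝ) (hKmeas : Measurable K) (hKtmeas : Measurable Ktilde)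
    (hKbd : ∀ᵐ y : ℝ, m ≤ K y ∧ K y ≤ M) (hKtbd : ∀ᵐ y : ℝ, m ≤ Ktilde y ∧ Ktilde y ≤ M)
    (hL : MemLp (fun y => Real.log (K y)) (ENNReal.ofReal p) (volume : Measure ℝ))
    (hLt : MemLp (fun y => Real.log (Ktilde y)) (ENNReal.ofReal p) (volume : Measure ℝ))
    (h htilde : ℝ → ℝ) (hhmeas : Measurable h) (hhtmeas : Measurable htilde)
    (hrep : h =ᵐ[volume] (H (hL.toLp _) : Lp ℝ (ENNReal.ofReal p) (volume : Measure ℝ)))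
    (hrept : htilde =ᵐ[volume]
      (H (hLt.toLp _) : Lp ℝ (ENNReal.ofReal p) (volume : Measure ℝ)))
    (ε : ℝ)
    (hdist : eLpNorm (fun y => K y - Ktilde y) (ENNReal.ofReal p) (volume : Measure ℝ) ≤
      ENNReal.ofReal ε) :
    eLpNorm (fun y =>
        (Real.sqrt (K y) : ℂ) * Complex.exp ((Complex.I / 2) * (h y : ℂ)) -
        (Real.sqrt (Ktilde y) : ℂ) * Complex.exp ((Complex.I / 2) * (htilde y : ℂ)))
        (ENNReal.ofReal p) (volume : Measure ℝ) ≤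
      ENNReal.ofReal (Real.sqrt M / (2 * m) * (1 + TRconst p) * ε) ∧
    eLpNorm (fun y =>
        (Real.sqrt (K y) : ℂ) * Complex.exp (-(Complex.I / 2) * (h y : ℂ)) -
        (Real.sqrt (Ktilde y) : ℂ) * Complex.exp (-(Complex.I / 2) * (htilde y : ℂ)))
        (ENNReal.ofReal p) (volume : Measure ℝ) ≤
      ENNReal.ofReal (Real.sqrt M / (2 * m) * (1 + TRconst p) * ε) := by
  have rw1 : ∀ t : ℝ, (Complex.I / 2) * (t : ℂ) = ((1/2 : ℝ) : ℂ) * Complex.I * (t : ℂ) := by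
    intro t; push_cast; ring
  have rw2 : ∀ t : ℝ, -(Complex.I / 2) * (t : ℂ) = ((-(1/2) : ℝ) : ℂ) * Complex.I * (t : ℂ) := by
    intro t; push_cast; ring
  constructor
  · simp only [rw1]
    exact WH_main_aux p hp H hH m M hm hmM K Ktilde hKmeas hKtmeas hKbd hKtbd hL hLt
      h htilde hhmeas hhtmeas hrep hrept ε hdist (1/2) (le_of_eq (abs_of_nonneg (by norm_num)))
  · simp only [rw2]
    exact WH_main_aux p hp H hH m M hm hmM K Ktilde hKmeas hKtmeas hKbd hKtbd hL hLt
      h htilde hhmeas hhtmeas hrep hrept ε hdist (-(1/2)) (by rw [abs_neg]; exact le_of_eq (abs_of_nonneg (by norm_num)))
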